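/- Consider the two-item auction (capacities c₁ = c₂ = 1) with bidders v₁(x) = max{400·𝟙[x₁≥1], 2·𝟙[x₂≥1]} and v₂(x) = 1.1·𝟙[x₁≥1]. Suppose the elicited reports are: bidder 1 demanded (1,0) at prices (1,1) and at (1.2,1); bidder 2 demanded (1,0) at prices (1,1) and (0,0) at (1.2,1). Then the winner-determination problem maximizing inferred social welfare assigns item 1 to bidder 1, achieving true social welfare 400 (efficiency 100%). If additionally the demand query at prices (401,1) is asked — answered by bidder 1 with (0,1) and by bidder 2 with (0,0) — then the winner-determination problem on the enlarged report set assigns item 2 to bidder 1 and item 1 to bidder 2, yielding true social welfare 3.1, i.e., efficiency 3.1/400 < 1%. -/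

import Mathlib

noncomputable section

/-- Bundles over two distinct items, each with capacity 1. -/
abbrev Bndl := ℕ × ℕ

/-- Bidder 1's value function. -/
def w1 (x : Bndl) : ℝ := max (if 1 ≤ x.1 then 400 else 0) (if 1 ≤ x.2 then 2 else 0)

/-- Bidder 2's value function. -/
def w2 (x : Bndl) : ℝ := if 1 ≤ x.1 then 1.1 else 0

/-- The inferred value of a bundle from a list of demand reports
(pairs of response-bundle and price vector): the maximum of ⟨p, x⟩ over all
reports whose response was exactly x, and 0 otherwise. -/
def inferred (R : List (Bndl × (ℝ × ℝ))) (x : Bndl) : ℝ :=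
  ((R.filter (fun r => decide (r.1 = x))).map
      (fun r => r.2.1 * (x.1 : ℝ) + r.2.2 * (x.2 : ℝ))).foldr max 0

/-- Bidder 1's demand reports after the first two demand queries. -/
def R1 : List (Bndl × (ℝ × ℝ)) := [((1, 0), (1, 1)), ((1, 0), (1.2, 1))]

/-- Bidder 2's demand reports after the first two demand queries. -/
def R2 : List (Bndl × (ℝ × ℝ)) := [((1, 0), (1, 1)), ((0, 0), (1.2, 1))]

/-- Bidder 1's reports after additionally answering the query at prices (401,1). -/
def R1' : List (Bndl × (ℝ × ℝ)) := R1 ++ [((0, 1), (401, 1))]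

/-- Bidder 2's reports after additionally answering the query at prices (401,1). -/
def R2' : List (Bndl × (ℝ × ℝ)) := R2 ++ [((0, 0), (401, 1))]

/-- A bidder may only be assigned a reported bundle or the empty bundle. -/
def allowed (R : List (Bndl × (ℝ × ℝ))) (x : Bndl) : Prop :=
  x = (0, 0) ∨ ∃ r ∈ R, r.1 = x

/-- Feasibility: each item assigned at most once. -/
def feasible (a : Bndl × Bndl) : Prop := a.1.1 + a.2.1 ≤ 1 ∧ a.1.2 + a.2.2 ≤ 1

/-- after the first two demand queries the WDP (maximizing inferred
social welfare) uniquely assigns item 1 to bidder 1, with true social welfare 400,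
the optimum (efficiency 100%).  After the additional demand query at prices
(401,1), the WDP on the enlarged reports uniquely assigns item 2 to bidder 1 and
item 1 to bidder 2, with true social welfare 3.1, i.e. efficiency 3.1/400 < 1%. -/

lemma aR1 {x : Bndl} (h : allowed R1 x) : x = (0,0) ∨ x = (1,0) := by
  simp [allowed, R1] at h; tauto

lemma aR2 {x : Bndl} (h : allowed R2 x) : x = (0,0) ∨ x = (1,0) := by
  simp [allowed, R2] at h; tauto

lemma aR1' {x : Bndl} (h : allowed R1' x) : x = (0,0) ∨ x = (1,0) ∨ x = (0,1) := by
  simp [allowed, R1', R1] at h; tauto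

lemma aR2' {x : Bndl} (h : allowed R2' x) : x = (0,0) ∨ x = (1,0) := by
  simp [allowed, R2', R2] at h; tauto

lemma i1a : inferred R1 (0,0) = 0 := by
  norm_num [inferred, R1, List.filter_cons, Prod.ext_iff]
lemma i1b : inferred R1 (1,0) = 1.2 := by
  norm_num [inferred, R1, List.filter_cons, Prod.ext_iff]
lemma i2a : inferred R2 (0,0) = 0 := by
  norm_num [inferred, R2, List.filter_cons, Prod.ext_iff]
lemma i2b : inferred R2 (1,0) = 1 := by
  norm_num [inferred, R2, List.filter_cons, Prod.ext_iff]
lemma i1'a : inferred R1' (0,0) = 0 := by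
  norm_num [inferred, R1', R1, List.filter_cons, Prod.ext_iff]
lemma i1'b : inferred R1' (1,0) = 1.2 := by
  norm_num [inferred, R1', R1, List.filter_cons, Prod.ext_iff]
lemma i1'c : inferred R1' (0,1) = 1 := by
  norm_num [inferred, R1', R1, List.filter_cons, Prod.ext_iff]
lemma i2'a : inferred R2' (0,0) = 0 := by
  norm_num [inferred, R2', R2, List.filter_cons, Prod.ext_iff]
lemma i2'b : inferred R2' (1,0) = 1 := by
  norm_num [inferred, R2', R2, List.filter_cons, Prod.ext_iff]
lemma z0 : ((0,0) : Bndl) = 0 := rfl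
lemma i1a0 : inferred R1 0 = 0 := i1a
lemma i2a0 : inferred R2 0 = 0 := i2a
lemma i1'a0 : inferred R1' 0 = 0 := i1'a
lemma i2'a0 : inferred R2' 0 = 0 := i2'a

theorem stmt3 :
    -- Phase 1: WDP assigns item 1 to bidder 1
    (∀ a : Bndl × Bndl, feasible a → allowed R1 a.1 → allowed R2 a.2 →
      inferred R1 a.1 + inferred R2 a.2 ≤ inferred R1 (1, 0) + inferred R2 (0, 0)) ∧
    feasible ((1, 0), (0, 0)) ∧ allowed R1 (1, 0) ∧ allowed R2 (0, 0) ∧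
    (∀ a : Bndl × Bndl, feasible a → allowed R1 a.1 → allowed R2 a.2 →
      inferred R1 a.1 + inferred R2 a.2 = inferred R1 (1, 0) + inferred R2 (0, 0) →
      a = ((1, 0), (0, 0))) ∧
    w1 (1, 0) + w2 (0, 0) = 400 ∧
    (∀ a : Bndl × Bndl, feasible a → w1 a.1 + w2 a.2 ≤ 400) ∧
    -- Phase 2: after the extra demand query at prices (401, 1)
    (∀ a : Bndl × Bndl, feasible a → allowed R1' a.1 → allowed R2' a.2 →
      inferred R1' a.1 + inferred R2' a.2 ≤ inferred R1' (0, 1) + inferred R2' (1, 0)) ∧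
    feasible ((0, 1), (1, 0)) ∧ allowed R1' (0, 1) ∧ allowed R2' (1, 0) ∧
    (∀ a : Bndl × Bndl, feasible a → allowed R1' a.1 → allowed R2' a.2 →
      inferred R1' a.1 + inferred R2' a.2 = inferred R1' (0, 1) + inferred R2' (1, 0) →
      a = ((0, 1), (1, 0))) ∧
    w1 (0, 1) + w2 (1, 0) = 3.1 ∧
    (3.1 : ℝ) / 400 < 0.01 := by
  refine ⟨?_, ?_, ?_, ?_, ?_, ?_, ?_, ?_, ?_, ?_, ?_, ?_, ?_, ?_⟩
  · rintro ⟨x, y⟩ hf hx hy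
    rcases aR1 hx with rfl | rfl <;> rcases aR2 hy with rfl | rfl <;>
      simp_all [feasible, i1a, i1b, i2a, i2b, i1a0, i2a0] <;> norm_num
  · exact ⟨by norm_num, by norm_num⟩
  · exact Or.inr ⟨((1,0),(1,1)), by simp [R1]⟩
  · exact Or.inl rfl
  · rintro ⟨x, y⟩ hf hx hy heq
    rcases aR1 hx with rfl | rfl <;> rcases aR2 hy with rfl | rfl <;>
      simp_all [feasible, i1a, i1b, i2a, i2b, i1a0, i2a0] <;> norm_num at heq
  · norm_num [w1, w2]
  · rintro ⟨⟨x1, x2⟩, ⟨y1, y2⟩⟩ ⟨h1, h2⟩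
    simp only [w1, w2]
    by_cases hx : 1 ≤ x1
    · have hy : ¬ 1 ≤ y1 := by simp only [feasible] at h1 ⊢; omega
      simp only [hx, hy, if_true, if_false, add_zero]
      exact max_le le_rfl (by split <;> norm_num)
    · simp only [hx, if_false]
      have h2' : ((0:ℝ) ⊔ if 1 ≤ x2 then 2 else 0) ≤ 2 := by split <;> norm_num
      have h3 : (if 1 ≤ y1 then (1.1:ℝ) else 0) ≤ 1.1 := by split <;> norm_num
      nlinarith
  · rintro ⟨x, y⟩ hf hx hy
    rcases aR1' hx with rfl | rfl | rfl <;> rcases aR2' hy with rfl | rfl <;>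
      simp_all [feasible, i1'a, i1'b, i1'c, i2'a, i2'b, i1'a0, i2'a0] <;> norm_num
  · exact ⟨by norm_num, by norm_num⟩
  · exact Or.inr ⟨((0,1),(401,1)), by simp [R1', R1]⟩
  · exact Or.inr ⟨((1,0),(1,1)), by simp [R2', R2]⟩
  · rintro ⟨x, y⟩ hf hx hy heq
    rcases aR1' hx with rfl | rfl | rfl <;> rcases aR2' hy with rfl | rfl <;>
      simp_all [feasible, i1'a, i1'b, i1'c, i2'a, i2'b, i1'a0, i2'a0] <;> norm_num at heq
  · norm_num [w1, w2]
  · norm_num
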